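/- Let E be an n-dimensional nilpotent evolution algebra whose structure matrix relative to a natural basis {e_1,...,e_n} is strictly upper triangular with all first-superdiagonal entries a_{i,i+1} nonzero (i.e., E has maximum index of nilpotency). Then for every element u with minimal support index k (i.e., u = Σ_{i≥k} μ_i e_i with μ_k ≠ 0), the subalgebra generated by u equals span{e_k, e_{k+1}, ..., e_n}. In particular, E is generated by any element of full support, and the subalgebra lattice of E is a chain of length n. -/

import Mathlib

open Submodule

variable {K : Type} [Field K] {E : Type} [AddCommGroup E] [Module K E]

/-- The product of two submodules under a bilinear multiplication. -/
def mulSet (μ : E →ₗ[K] E →ₗ[K] E) (U V : Submodule K E) : Submodule K E :=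
  Submodule.span K {z | ∃ u ∈ U, ∃ v ∈ V, z = μ u v}

/-- Derived series starting from a submodule: `dser μ I 0 = I`,
`dser μ I (k+1) = (dser μ I k)·(dser μ I k)`.  Thus `dser μ ⊤ (k-1) = E^(k)`. -/
def dser (μ : E →ₗ[K] E →ₗ[K] E) (I : Submodule K E) : ℕ → Submodule K E
  | 0 => I
  | k + 1 => mulSet μ (dser μ I k) (dser μ I k)

/-- Lower central-type series: `lowerPow μ k = E^(k+1)` where
`E^1 = E` and `E^(k+1) = Σ_{i=1}^k E^i E^(k+1-i)`. -/
def lowerPow (μ : E →ₗ[K] E →ₗ[K] E) : ℕ → Submodule K E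
  | 0 => ⊤
  | k + 1 => ⨆ i : Fin (k + 1), mulSet μ (lowerPow μ i.1) (lowerPow μ (k - i.1))
  decreasing_by
  · exact i.2
  · omega

/-- A submodule closed under the multiplication. -/
def IsSubalg (μ : E →ₗ[K] E →ₗ[K] E) (U : Submodule K E) : Prop :=
  ∀ x ∈ U, ∀ y ∈ U, μ x y ∈ U

/-- A (two-sided) ideal. -/
def IsIdeal (μ : E →ₗ[K] E →ₗ[K] E) (I : Submodule K E) : Prop :=
  ∀ x ∈ I, ∀ y : E, μ x y ∈ I ∧ μ y x ∈ I

/-- Subalgebra generated by a set. -/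
def gen (μ : E →ₗ[K] E →ₗ[K] E) (s : Set E) : Submodule K E :=
  sInf {W | IsSubalg μ W ∧ s ⊆ W}

/-- Quasi-ideal: the subalgebra generated together with any subalgebra is the vector-space sum. -/
def QuasiIdeal (μ : E →ₗ[K] E →ₗ[K] E) (U : Submodule K E) : Prop :=
  IsSubalg μ U ∧ ∀ V : Submodule K E, IsSubalg μ V → gen μ (↑U ∪ ↑V) = U ⊔ V

/-- The subalgebra lattice is modular. -/
def ModularLat (μ : E →ₗ[K] E →ₗ[K] E) : Prop :=
  ∀ U V W : Submodule K E, IsSubalg μ U → IsSubalg μ V → IsSubalg μ W → U ≤ W →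
    gen μ (↑U ∪ ↑(V ⊓ W)) = gen μ (↑U ∪ ↑V) ⊓ W

/-- The subalgebra lattice is distributive. -/
def DistribLat (μ : E →ₗ[K] E →ₗ[K] E) : Prop :=
  ∀ U V W : Submodule K E, IsSubalg μ U → IsSubalg μ V → IsSubalg μ W →
    gen μ (↑U ∪ ↑(V ⊓ W)) = gen μ (↑U ∪ ↑V) ⊓ gen μ (↑U ∪ ↑W)

/-- Supersolvable: a complete flag of ideals. -/
def Supersolvable (μ : E →ₗ[K] E →ₗ[K] E) : Prop :=
  ∃ I : ℕ → Submodule K E, (∀ i, IsIdeal μ (I i)) ∧ (∀ i, I i ≤ I (i + 1)) ∧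
    (∀ i ≤ Module.finrank K E, Module.finrank K (I i) = i) ∧ I (Module.finrank K E) = ⊤

/-- Maximal subalgebra `A` of the subalgebra `B`. -/
def MaxIn (μ : E →ₗ[K] E →ₗ[K] E) (A B : Submodule K E) : Prop :=
  A ≤ B ∧ A ≠ B ∧ ∀ W : Submodule K E, IsSubalg μ W → A ≤ W → W ≤ B → W = A ∨ W = B

/-- in a nilpotent evolution algebra with strictly upper triangular
structure matrix all of whose first-superdiagonal entries are nonzero (maximum index
of nilpotency), the subalgebra generated by any element with minimal support index `k`
is `span{e_k, …, e_n}`; in particular the subalgebra lattice is a chain. -/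
theorem stmt8 {n : ℕ} (μ : E →ₗ[K] E →ₗ[K] E)
    (hcomm : ∀ x y : E, μ x y = μ y x)
    (b : Module.Basis (Fin n) K E)
    (hnat : ∀ i j : Fin n, i ≠ j → μ (b i) (b j) = 0)
    (hupper : ∀ i k : Fin n, k ≤ i → b.repr (μ (b i) (b i)) k = 0)
    (hsd : ∀ i : ℕ, ∀ h : i + 1 < n,
      b.repr (μ (b ⟨i, by omega⟩) (b ⟨i, by omega⟩)) ⟨i + 1, h⟩ ≠ 0) :
    (∀ u : E, ∀ k : Fin n, b.repr u k ≠ 0 → (∀ j : Fin n, j < k → b.repr u j = 0) →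
      gen μ {u} = Submodule.span K (b '' {j : Fin n | k ≤ j})) ∧
    (∀ U V : Submodule K E, IsSubalg μ U → IsSubalg μ V → U ≤ V ∨ V ≤ U) := by
  classical
  set F : ℕ → Submodule K E := fun k => Submodule.span K (b '' {j : Fin n | k ≤ j.1}) with hF
  -- membership criterion
  have memF : ∀ (k : ℕ) (x : E), x ∈ F k ↔ ∀ j : Fin n, j.1 < k → b.repr x j = 0 := by
    intro k x
    rw [hF]
    rw [Module.Basis.mem_span_image]
    constructor
    · intro h j hj
      by_contra hne
      exact absurd (h (Finsupp.mem_support_iff.2 hne)) (by simpa using hj)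
    · intro h j hj
      by_contra hlt
      exact (Finsupp.mem_support_iff.1 hj) (h j (by simpa using hlt))
  -- antitonicity
  have Fmono : ∀ k k' : ℕ, k ≤ k' → F k' ≤ F k := by
    intro k k' hkk'
    intro x hx
    rw [memF] at hx ⊢
    exact fun j hj => hx j (lt_of_lt_of_le hj hkk')
  -- basis vectors in F
  have bmemF : ∀ (k : ℕ) (j : Fin n), k ≤ j.1 → b j ∈ F k := by
    intro k j hj
    exact Submodule.subset_span ⟨j, hj, rfl⟩
  -- representation of a square
  have reprmul : ∀ (u : E) (t : Fin n),
      b.repr (μ u u) t = ∑ i : Fin n, b.repr u i * b.repr u i * b.repr (μ (b i) (b i)) t := by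
    intro u t
    have h1 : μ u u = ∑ i : Fin n, (b.repr u i * b.repr u i) • μ (b i) (b i) := by
      conv_lhs => rw [← b.sum_repr u]
      rw [map_sum]
      refine Finset.sum_congr rfl fun x _ => ?_
      rw [map_smul, map_sum, LinearMap.sum_apply, Finset.sum_eq_single x]
      · rw [map_smul, LinearMap.smul_apply, smul_smul]
      · intro j _ hj
        rw [map_smul, LinearMap.smul_apply, hnat j x hj]
        simp
      · simp
    rw [h1, map_sum, Finsupp.finset_sum_apply]
    refine Finset.sum_congr rfl fun i _ => ?_
    rw [map_smul, Finsupp.smul_apply, smul_eq_mul]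
  -- the square of a minimal-index-k element has minimal index k+1
  have sq_min : ∀ (u : E) (k : Fin n), b.repr u k ≠ 0 → (∀ j : Fin n, j < k → b.repr u j = 0) →
      (∀ t : Fin n, t.1 < k.1 + 1 → b.repr (μ u u) t = 0) ∧
      (∀ h : k.1 + 1 < n, b.repr (μ u u) ⟨k.1 + 1, h⟩ ≠ 0) := by
    intro u k hk hmin
    constructor
    · intro t ht
      rw [reprmul]
      refine Finset.sum_eq_zero fun i _ => ?_
      by_cases hik : i < k
      · rw [hmin i hik]; ring
      · have : t ≤ i := by
          rw [Fin.le_def]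
          rw [Fin.lt_def, not_lt] at hik
          omega
        rw [hupper i t this]; ring
    · intro h
      rw [reprmul, Finset.sum_eq_single k]
      · have h1 := hsd k.1 (by omega : k.1 + 1 < n)
        have hek : (⟨k.1, by omega⟩ : Fin n) = k := rfl
        rw [hek] at h1
        exact mul_ne_zero (mul_ne_zero hk hk) h1
      · intro i _ hik
        rcases lt_or_gt_of_ne hik with hlt | hgt
        · rw [hmin i hlt]; ring
        · have hki : k.1 < i.1 := hgt
          have : (⟨k.1 + 1, h⟩ : Fin n) ≤ i := by
            rw [Fin.le_def]
            exact hki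
          rw [hupper i _ this]; ring
      · simp
  -- F k is a subalgebra
  have Fsub : ∀ k : ℕ, IsSubalg μ (F k) := by
    intro k
    have hb : ∀ i : Fin n, k ≤ i.1 → ∀ j : Fin n, k ≤ j.1 → μ (b i) (b j) ∈ F k := by
      intro i hi j hj
      by_cases hij : i = j
      · subst hij
        rw [memF]
        intro t ht
        exact hupper i t (by rw [Fin.le_def]; omega)
      · rw [hnat i j hij]; exact (F k).zero_mem
    intro x hx y hy
    have h1 : ∀ x ∈ F k, ∀ j : Fin n, k ≤ j.1 → μ x (b j) ∈ F k := by
      intro x hx j hj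
      refine Submodule.span_induction ?_ ?_ ?_ ?_ hx
      · rintro z ⟨i, hi, rfl⟩
        exact hb i hi j hj
      · simp
      · intro a c _ _ ha hc
        rw [map_add, LinearMap.add_apply]
        exact (F k).add_mem ha hc
      · intro r a _ ha
        rw [map_smul, LinearMap.smul_apply]
        exact (F k).smul_mem r ha
    refine Submodule.span_induction ?_ ?_ ?_ ?_ hy
    · rintro z ⟨j, hj, rfl⟩
      exact h1 x hx j hj
    · simp
    · intro a c _ _ ha hc
      rw [map_add]
      exact (F k).add_mem ha hc
    · intro r a _ ha
      rw [map_smul]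
      exact (F k).smul_mem r ha
  -- key lemma: a subalgebra containing an element of minimal index k contains F k
  have key : ∀ (d : ℕ) (k : Fin n), n - k.1 = d → ∀ u : E, b.repr u k ≠ 0 →
      (∀ j : Fin n, j < k → b.repr u j = 0) → ∀ W : Submodule K E, IsSubalg μ W → u ∈ W →
      F k.1 ≤ W := by
    intro d
    induction d with
    | zero => intro k hk; omega
    | succ d ih =>
      intro k hkd u hk hmin W hW huW
      have hv : μ u u ∈ W := hW u huW u huW
      obtain ⟨hz, hnz⟩ := sq_min u k hk hmin
      have hF1 : F (k.1 + 1) ≤ W := by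
        by_cases h : k.1 + 1 < n
        · exact ih ⟨k.1 + 1, h⟩ (by show n - (k.1 + 1) = d; omega) (μ u u) (hnz h)
            (fun j hj => hz j (by rw [Fin.lt_def] at hj; exact hj)) W hW hv
        · intro x hx
          rw [memF] at hx
          have hx0 : b.repr x = 0 := by
            ext j
            have hjn := j.2
            exact hx j (by omega)
          have : x = 0 := by
            have := congrArg b.repr.symm hx0
            simpa using this
          rw [this]; exact W.zero_mem
      have hw : u - b.repr u k • b k ∈ F (k.1 + 1) := by
        rw [memF]
        intro j hj
        rw [map_sub, map_smul, Finsupp.sub_apply, Finsupp.smul_apply, Module.Basis.repr_self,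
          smul_eq_mul]
        by_cases hjk : j = k
        · subst hjk; simp
        · have : j < k := by
            rw [Fin.lt_def]
            have : j.1 ≠ k.1 := fun hc => hjk (Fin.ext hc)
            omega
          rw [hmin j this, Finsupp.single_apply, if_neg (fun hc => hjk hc.symm)]
          simp
      have hbk : b k ∈ W := by
        have h1 : u - b.repr u k • b k ∈ W := hF1 hw
        have h2 : b.repr u k • b k ∈ W := by
          have h3 := W.sub_mem huW h1
          simpa using h3
        have h4 := W.smul_mem (b.repr u k)⁻¹ h2
        rwa [smul_smul, inv_mul_cancel₀ hk, one_smul] at h4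
      rw [hF]
      rw [Submodule.span_le]
      rintro _ ⟨j, hj, rfl⟩
      have hj' : k.1 ≤ j.1 := hj
      by_cases hjk : j = k
      · rw [hjk]; exact hbk
      · refine hF1 (bmemF (k.1 + 1) j ?_)
        have : j.1 ≠ k.1 := fun hc => hjk (Fin.ext hc)
        omega
  -- the target span equals F k
  have spanF : ∀ k : Fin n, Submodule.span K (b '' {j : Fin n | k ≤ j}) = F k.1 := by
    intro k
    rw [hF]
    congr 1
  constructor
  · intro u k hk hmin
    have humem : u ∈ F k.1 := by
      rw [memF]
      exact fun j hj => hmin j (by rw [Fin.lt_def]; exact hj)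
    have h1 : gen μ {u} ≤ F k.1 :=
      sInf_le ⟨Fsub k.1, Set.singleton_subset_iff.2 humem⟩
    have h2 : F k.1 ≤ gen μ {u} :=
      le_sInf fun W hW => key (n - k.1) k rfl u hk hmin W hW.1 (hW.2 rfl)
    rw [spanF k]
    exact le_antisymm h1 h2
  · intro U V hU hV
    have classify : ∀ W : Submodule K E, IsSubalg μ W → W = ⊥ ∨ ∃ k : Fin n, W = F k.1 := by
      intro W hW
      by_cases hWbot : W = ⊥
      · exact Or.inl hWbot
      right
      obtain ⟨x, hxW, hx0⟩ := Submodule.exists_mem_ne_zero_of_ne_bot hWbot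
      set S : Set ℕ := {m : ℕ | ∃ u ∈ W, ∃ hm : m < n, b.repr u ⟨m, hm⟩ ≠ 0} with hS
      have hSne : S.Nonempty := by
        have : b.repr x ≠ 0 := fun hc => hx0 (by
          have := congrArg b.repr.symm hc
          simpa using this)
        obtain ⟨j, hj⟩ := Finsupp.ne_iff.1 this
        exact ⟨j.1, x, hxW, j.2, by simpa using hj⟩
      have hmem := Nat.sInf_mem hSne
      obtain ⟨u, huW, hmn, hum⟩ := hmem
      set k : Fin n := ⟨sInf S, hmn⟩ with hkdef
      have hmin : ∀ j : Fin n, j < k → b.repr u j = 0 := by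
        intro j hj
        by_contra hne
        have : j.1 ∈ S := ⟨u, huW, j.2, by simpa using hne⟩
        have h2 := Nat.sInf_le this
        have hj' : j.1 < sInf S := hj
        omega
      refine ⟨k, le_antisymm ?_ (key (n - k.1) k rfl u hum hmin W hW huW)⟩
      intro w hwW
      rw [memF]
      intro j hj
      by_contra hne
      have hmem2 : j.1 ∈ S := ⟨w, hwW, j.2, by simpa using hne⟩
      have h2 := Nat.sInf_le hmem2
      have hj' : j.1 < sInf S := hj
      omega
    rcases classify U hU with hUb | ⟨k, hUk⟩
    · left; rw [hUb]; exact bot_le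
    rcases classify V hV with hVb | ⟨k', hVk⟩
    · right; rw [hVb]; exact bot_le
    rcases le_total k.1 k'.1 with h | h
    · right; rw [hUk, hVk]; exact Fmono k.1 k'.1 h
    · left; rw [hUk, hVk]; exact Fmono k'.1 k.1 h
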